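/- For every C > 0, the set V_C of equivalence classes in L¹([0,1]) represented by functions f:[0,1]→[0,∞) of bounded variation with f(0) ≤ C and total variation Var f ≤ C is a compact subset of the metric space (L¹([0,1]), ρ). -/

import Mathlib

open MeasureTheory Set Filter Topology
open scoped ENNReal NNReal

/-- Diagonal extraction: a uniformly bounded sequence of functions has a subsequence
converging pointwise on a countable set. -/
lemma helly_diag {B : ℝ} (g : ℕ → ℝ → ℝ) (T : Set ℝ) (hT : T.Countable)
    (hb : ∀ n x, g n x ∈ Set.Icc (-B) B) :
    ∃ φ : ℕ → ℕ, StrictMono φ ∧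
      ∀ x ∈ T, ∃ l, Tendsto (fun n => g (φ n) x) atTop (𝓝 l) := by
  haveI : Countable T := hT.to_subtype
  have hKc : IsCompact (Set.univ.pi fun _ : T => Set.Icc (-B) B) :=
    isCompact_univ_pi fun _ => isCompact_Icc
  have hu : ∀ n, (fun x : T => g n x) ∈ (Set.univ.pi fun _ : T => Set.Icc (-B) B) :=
    fun n x _ => hb n x
  obtain ⟨l, -, φ, hφ, hconv⟩ := hKc.tendsto_subseq hu
  exact ⟨φ, hφ, fun x hx => ⟨l ⟨x, hx⟩, (tendsto_pi_nhds.mp hconv) ⟨x, hx⟩⟩⟩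

/-- Helly upgrade: monotone functions converging on the rationals converge at every
continuity point of a (liminf-type) limit function. -/
lemma helly_upgrade {p : ℕ → ℝ → ℝ} (hm : ∀ n, Monotone (p n)) {P : ℝ → ℝ}
    (hP : ∀ q : ℚ, Tendsto (fun n => p n (q : ℝ)) atTop (𝓝 (P (q : ℝ))))
    {x : ℝ} (hx : ContinuousAt P x) : Tendsto (fun n => p n x) atTop (𝓝 (P x)) := by
  rw [Metric.tendsto_atTop]
  intro ε hε
  have hε3 : 0 < ε / 3 := by linarith
  obtain ⟨δ, hδ, hδP⟩ := Metric.continuousAt_iff.mp hx (ε / 3) hε3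
  obtain ⟨d₁, hd₁⟩ := exists_rat_btwn (show x - δ < x by linarith)
  obtain ⟨d₂, hd₂⟩ := exists_rat_btwn (show x < x + δ by linarith)
  have hPd₁ : |P d₁ - P x| < ε / 3 := by
    have : dist (d₁ : ℝ) x < δ := by
      rw [Real.dist_eq, abs_lt]; constructor <;> [linarith [hd₁.1, hd₁.2]; linarith [hd₁.2]]
    simpa [Real.dist_eq] using hδP this
  have hPd₂ : |P d₂ - P x| < ε / 3 := by
    have : dist (d₂ : ℝ) x < δ := by
      rw [Real.dist_eq, abs_lt]; constructor <;> [linarith [hd₂.1]; linarith [hd₂.1, hd₂.2]]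
    simpa [Real.dist_eq] using hδP this
  have h₁ := (Metric.tendsto_atTop.mp (hP d₁)) (ε / 3) hε3
  have h₂ := (Metric.tendsto_atTop.mp (hP d₂)) (ε / 3) hε3
  obtain ⟨N₁, hN₁⟩ := h₁
  obtain ⟨N₂, hN₂⟩ := h₂
  refine ⟨max N₁ N₂, fun n hn => ?_⟩
  have h₁' := hN₁ n (le_trans (le_max_left _ _) hn)
  have h₂' := hN₂ n (le_trans (le_max_right _ _) hn)
  rw [Real.dist_eq, abs_lt] at h₁' h₂' ⊢
  have hl : p n d₁ ≤ p n x := hm n hd₁.2.le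
  have hr : p n x ≤ p n d₂ := hm n hd₂.1.le
  rw [abs_lt] at hPd₁ hPd₂
  constructor <;> nlinarith [h₁'.1, h₁'.2, h₂'.1, h₂'.2, hPd₁.1, hPd₁.2, hPd₂.1, hPd₂.2]

/-- Lower semicontinuity of variation under pointwise convergence, in inequality form. -/
lemma evar_le_of_tendsto {f : ℕ → ℝ → ℝ} {g : ℝ → ℝ} {s : Set ℝ} {c : ℝ≥0∞}
    (hconv : ∀ x ∈ s, Tendsto (fun n => f n x) atTop (𝓝 (g x)))
    (hbd : ∀ n, eVariationOn (f n) s ≤ c) : eVariationOn g s ≤ c := by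
  by_contra h
  push_neg at h
  obtain ⟨n, hn⟩ := (eVariationOn.lowerSemicontinuous_aux hconv h).exists
  exact absurd (hbd n) (not_le.mpr hn)

/-- For every `C > 0`, the set `V_C` of equivalence classes in `L¹([0,1])` represented by
functions `f : [0,1] → [0,∞)` of bounded variation with `f 0 ≤ C` and total variation
`Var f ≤ C` is a compact subset of `L¹([0,1])`. -/
theorem stmt_0 (C : ℝ) (hC : 0 < C) :
    IsCompact {h : Lp ℝ 1 (volume.restrict (Set.Icc (0:ℝ) 1)) |
      ∃ f : ℝ → ℝ,
        (∀ t ∈ Set.Icc (0:ℝ) 1, 0 ≤ f t) ∧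
        BoundedVariationOn f (Set.Icc 0 1) ∧
        f 0 ≤ C ∧
        eVariationOn f (Set.Icc 0 1) ≤ ENNReal.ofReal C ∧
        (∀ᵐ t ∂(volume.restrict (Set.Icc (0:ℝ) 1)), h t = f t)} := by
  set μ := volume.restrict (Set.Icc (0:ℝ) 1) with hμ_def
  haveI : IsFiniteMeasure μ := ⟨by rw [Measure.restrict_apply_univ]; exact measure_Icc_lt_top⟩
  apply IsSeqCompact.isCompact
  intro u hu
  simp only [Set.mem_setOf_eq] at hu
  choose f hpos hbvn hfzero hvarn haen using hu
  -- the clamp function onto [0,1]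
  set c : ℝ → ℝ := fun x => max 0 (min 1 x) with hc_def
  have hc_mono : Monotone c := fun a b hab => max_le_max le_rfl (min_le_min le_rfl hab)
  have hcI : ∀ x, c x ∈ Set.Icc (0:ℝ) 1 :=
    fun x => ⟨le_max_left _ _, max_le (by norm_num) (min_le_left _ _)⟩
  have hcid : ∀ x ∈ Set.Icc (0:ℝ) 1, c x = x := fun x hx => by
    simp only [hc_def]; rw [min_eq_right hx.2, max_eq_right hx.1]
  have hc0 : c 0 = 0 := by norm_num [hc_def]
  have h0I : (0:ℝ) ∈ Set.Icc (0:ℝ) 1 := by norm_num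
  have hlbv : ∀ n, LocallyBoundedVariationOn (f n) (Set.Icc 0 1) :=
    fun n => (hbvn n).locallyBoundedVariationOn
  -- uniform bounds
  have hVC : ∀ n, (eVariationOn (f n) (Set.Icc 0 1)).toReal ≤ C :=
    fun n => ENNReal.toReal_le_of_le_ofReal hC.le (hvarn n)
  have hf0C : ∀ n, 0 ≤ f n 0 := fun n => hpos n 0 h0I
  have hfub : ∀ n, ∀ x ∈ Set.Icc (0:ℝ) 1, f n x ≤ 2 * C := by
    intro n x hx
    have h1 : f n x - f n 0 ≤ (eVariationOn (f n) (Set.Icc 0 1)).toReal :=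
      (hbvn n).sub_le hx h0I
    have := hVC n; have := hfzero n
    linarith
  -- monotone decomposition
  set p : ℕ → ℝ → ℝ :=
    fun n x => f n 0 + variationOnFromTo (f n) (Set.Icc 0 1) 0 (c x) with hp_def
  set q : ℕ → ℝ → ℝ := fun n x => p n x - f n (c x) with hq_def
  have hp_mono : ∀ n, Monotone (p n) := fun n a b hab =>
    add_le_add_right ((variationOnFromTo.monotoneOn (hlbv n) h0I) (hcI a) (hcI b) (hc_mono hab)) _
  have hq_mono : ∀ n, Monotone (q n) := by
    intro n a b hab
    have h := (variationOnFromTo.sub_self_monotoneOn (hlbv n) h0I) (hcI a) (hcI b) (hc_mono hab)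
    simp only [Pi.sub_apply] at h
    simp only [hq_def, hp_def]
    linarith
  have hvfr_le : ∀ n x, variationOnFromTo (f n) (Set.Icc 0 1) 0 (c x) ≤ C := by
    intro n x
    rw [variationOnFromTo.eq_of_le _ _ (hcI x).1]
    exact le_trans
      (ENNReal.toReal_mono (hbvn n) (eVariationOn.mono _ Set.inter_subset_left)) (hVC n)
  have hvfr_nonneg : ∀ n x, 0 ≤ variationOnFromTo (f n) (Set.Icc 0 1) 0 (c x) :=
    fun n x => variationOnFromTo.nonneg_of_le _ _ (hcI x).1
  have hp_bnd : ∀ n x, p n x ∈ Set.Icc (-(2 * C)) (2 * C) := by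
    intro n x
    constructor
    · simp only [hp_def]; nlinarith [hf0C n, hvfr_nonneg n x, hC]
    · simp only [hp_def]; nlinarith [hfzero n, hvfr_le n x, hC]
  have hF_nonneg : ∀ n x, 0 ≤ f n (c x) := fun n x => hpos n _ (hcI x)
  have hF_le : ∀ n x, f n (c x) ≤ 2 * C := fun n x => hfub n _ (hcI x)
  have hcc : ∀ x, c (c x) = c x := fun x => hcid _ (hcI x)
  have hq_nonneg : ∀ n x, 0 ≤ q n x := by
    intro n x
    have hqcx : q n (c x) = q n x := by
      simp only [hq_def, hp_def, hcc]
    have hq00 : q n 0 = 0 := by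
      simp only [hq_def, hp_def, hc0, variationOnFromTo.self, add_zero, sub_self]
    have := hq_mono n (show (0:ℝ) ≤ c x from (hcI x).1)
    rw [hq00, hqcx] at this
    exact this
  have hq_bnd : ∀ n x, q n x ∈ Set.Icc (-(2 * C)) (2 * C) := by
    intro n x
    have h2 := (hp_bnd n x).2
    have h3 := hF_nonneg n x
    have h0 := hq_nonneg n x
    refine ⟨by linarith, ?_⟩
    simp only [hq_def] at h0 ⊢
    linarith
  -- first two extractions: convergence of p and q on the rationals
  obtain ⟨φ₁, hφ₁, hp1⟩ :=
    helly_diag p (Set.range ((↑) : ℚ → ℝ)) (Set.countable_range _) hp_bnd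
  obtain ⟨φ₂, hφ₂, hq2⟩ := helly_diag (fun n => q (φ₁ n)) (Set.range ((↑) : ℚ → ℝ))
    (Set.countable_range _) (fun n x => hq_bnd (φ₁ n) x)
  set χ := φ₁ ∘ φ₂ with hχ_def
  have hχm : StrictMono χ := hφ₁.comp hφ₂
  have hpD : ∀ x ∈ Set.range ((↑) : ℚ → ℝ), ∃ l,
      Tendsto (fun n => p (χ n) x) atTop (𝓝 l) := by
    intro x hx
    obtain ⟨l, hl⟩ := hp1 x hx
    exact ⟨l, hl.comp hφ₂.tendsto_atTop⟩
  have hqD : ∀ x ∈ Set.range ((↑) : ℚ → ℝ), ∃ l,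
      Tendsto (fun n => q (χ n) x) atTop (𝓝 l) := fun x hx => hq2 x hx
  set P : ℝ → ℝ := fun x => liminf (fun n => p (χ n) x) atTop with hP_def
  set Q : ℝ → ℝ := fun x => liminf (fun n => q (χ n) x) atTop with hQ_def
  have hPD : ∀ x ∈ Set.range ((↑) : ℚ → ℝ),
      Tendsto (fun n => p (χ n) x) atTop (𝓝 (P x)) := by
    intro x hx
    obtain ⟨l, hl⟩ := hpD x hx
    have : P x = l := hl.liminf_eq
    rwa [this]
  have hQD : ∀ x ∈ Set.range ((↑) : ℚ → ℝ),
      Tendsto (fun n => q (χ n) x) atTop (𝓝 (Q x)) := by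
    intro x hx
    obtain ⟨l, hl⟩ := hqD x hx
    have : Q x = l := hl.liminf_eq
    rwa [this]
  have hP_mono : Monotone P := by
    intro a b hab
    refine liminf_le_liminf (Eventually.of_forall fun n => hp_mono _ hab)
      (isBoundedUnder_of ⟨-(2 * C), fun n => (hp_bnd _ a).1⟩)
      ((isBoundedUnder_of ⟨2 * C, fun n => (hp_bnd _ b).2⟩).isCoboundedUnder_ge)
  have hQ_mono : Monotone Q := by
    intro a b hab
    refine liminf_le_liminf (Eventually.of_forall fun n => hq_mono _ hab)
      (isBoundedUnder_of ⟨-(2 * C), fun n => (hq_bnd _ a).1⟩)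
      ((isBoundedUnder_of ⟨2 * C, fun n => (hq_bnd _ b).2⟩).isCoboundedUnder_ge)
  -- bad set
  set Bs : Set ℝ := {x | ¬ContinuousAt P x} ∪ {x | ¬ContinuousAt Q x} with hBs_def
  have hBc : Bs.Countable :=
    (hP_mono.countable_not_continuousAt).union (hQ_mono.countable_not_continuousAt)
  set F : ℕ → ℝ → ℝ := fun n x => f n (c x) with hF_def
  have hF_bnd : ∀ n x, F n x ∈ Set.Icc (-(2 * C)) (2 * C) := fun n x =>
    ⟨by linarith [hF_nonneg n x], hF_le n x⟩
  obtain ⟨φ₃, hφ₃, hF3⟩ :=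
    helly_diag (fun n => F (χ n)) Bs hBc (fun n x => hF_bnd (χ n) x)
  set ψ := χ ∘ φ₃ with hψ_def
  have hψm : StrictMono ψ := hχm.comp hφ₃
  have hFpq : ∀ n x, F n x = p n x - q n x := fun n x => by
    simp only [hq_def]; ring
  set G : ℝ → ℝ := fun x => P x - Q x with hG_def
  have hnotB : ∀ x ∉ Bs, Tendsto (fun n => F (ψ n) x) atTop (𝓝 (G x)) := by
    intro x hx
    rw [hBs_def, Set.mem_union] at hx
    push_neg at hx
    simp only [Set.mem_setOf_eq, not_not] at hx
    have hp' : Tendsto (fun n => p (χ n) x) atTop (𝓝 (P x)) :=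
      helly_upgrade (fun n => hp_mono (χ n)) (fun r => hPD _ ⟨r, rfl⟩) hx.1
    have hq' : Tendsto (fun n => q (χ n) x) atTop (𝓝 (Q x)) :=
      helly_upgrade (fun n => hq_mono (χ n)) (fun r => hQD _ ⟨r, rfl⟩) hx.2
    have h := (hp'.sub hq').comp hφ₃.tendsto_atTop
    have heq : (fun n => F (ψ n) x) =
        fun n => p (χ (φ₃ n)) x - q (χ (φ₃ n)) x := funext fun n => hFpq _ _
    rw [heq]
    exact h
  have hconv : ∀ x, ∃ l, Tendsto (fun n => F (ψ n) x) atTop (𝓝 l) := by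
    intro x
    by_cases hx : x ∈ Bs
    · exact hF3 x hx
    · exact ⟨G x, hnotB x hx⟩
  set f0 : ℝ → ℝ := fun x => liminf (fun n => F (ψ n) x) atTop with hf0_def
  have hconv' : ∀ x, Tendsto (fun n => F (ψ n) x) atTop (𝓝 (f0 x)) := by
    intro x
    obtain ⟨l, hl⟩ := hconv x
    have : f0 x = l := hl.liminf_eq
    rwa [this]
  have hGf0 : ∀ x ∉ Bs, f0 x = G x :=
    fun x hx => tendsto_nhds_unique (hconv' x) (hnotB x hx)
  -- properties of the limit function f0
  have hf0_nonneg : ∀ t ∈ Set.Icc (0:ℝ) 1, 0 ≤ f0 t := fun t _ =>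
    ge_of_tendsto (hconv' t) (Eventually.of_forall fun n => hF_nonneg (ψ n) t)
  have hf0_zero : f0 0 ≤ C := by
    refine le_of_tendsto (hconv' 0) (Eventually.of_forall fun n => ?_)
    simp only [hF_def, hc0]
    exact hfzero (ψ n)
  have hvar0 : eVariationOn f0 (Set.Icc 0 1) ≤ ENNReal.ofReal C := by
    refine evar_le_of_tendsto (fun x _ => hconv' x) (fun n => ?_)
    have heq : eVariationOn (F (ψ n)) (Set.Icc 0 1) = eVariationOn (f (ψ n)) (Set.Icc 0 1) :=
      eVariationOn.eq_of_eqOn (fun x hx => by simp only [hF_def]; rw [hcid x hx])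
    rw [heq]
    exact hvarn _
  have hbv0 : BoundedVariationOn f0 (Set.Icc 0 1) :=
    ne_top_of_le_ne_top ENNReal.ofReal_ne_top hvar0
  -- measure-theoretic part
  have hBs0 : μ Bs = 0 :=
    le_antisymm (le_trans (Measure.restrict_apply_le _ _) ((hBc.measure_zero _).le)) zero_le
  have hae_notB : ∀ᵐ x ∂μ, x ∉ Bs := by
    rw [ae_iff]
    simpa using hBs0
  have hPmeas : Measurable P := hP_mono.measurable
  have hQmeas : Measurable Q := hQ_mono.measurable
  have hGmeas : Measurable G := hPmeas.sub hQmeas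
  have hG_bnd : ∀ x ∉ Bs, |G x| ≤ 2 * C := by
    intro x hx
    rw [abs_le]
    exact ⟨ge_of_tendsto (hnotB x hx) (Eventually.of_forall fun n => (hF_bnd (ψ n) x).1),
      le_of_tendsto (hnotB x hx) (Eventually.of_forall fun n => (hF_bnd (ψ n) x).2)⟩
  have hGmem : MemLp G 1 μ := by
    refine MemLp.of_bound hGmeas.aestronglyMeasurable (2 * C) ?_
    filter_upwards [hae_notB] with x hx
    simpa [Real.norm_eq_abs] using hG_bnd x hx
  set H := hGmem.toLp G with hH_def
  have hae_mem : ∀ᵐ t ∂μ, t ∈ Set.Icc (0:ℝ) 1 := ae_restrict_mem measurableSet_Icc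
  have hHf0 : ∀ᵐ t ∂μ, H t = f0 t := by
    filter_upwards [hGmem.coeFn_toLp, hae_notB] with t h1 h2
    rw [h1, ← hGf0 t h2]
  refine ⟨H, ⟨f0, hf0_nonneg, hbv0, hf0_zero, hvar0, hHf0⟩, ψ, hψm, ?_⟩
  -- L¹ convergence via dominated convergence
  have hFmeas : ∀ n, Measurable (F n) := by
    intro n
    have : F n = fun x => p n x - q n x := funext (hFpq n)
    rw [this]
    exact ((hp_mono n).measurable).sub ((hq_mono n).measurable)
  have key : Tendsto (fun n => ∫⁻ x, (‖F (ψ n) x - G x‖₊ : ℝ≥0∞) ∂μ) atTop (𝓝 0) := by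
    have h0' : (0:ℝ≥0∞) = ∫⁻ _, (0:ℝ≥0∞) ∂μ := by simp
    rw [h0']
    refine tendsto_lintegral_of_dominated_convergence (fun _ => ENNReal.ofReal (4 * C))
      (fun n => ?_) (fun n => ?_) ?_ ?_
    · exact (((hFmeas (ψ n)).sub hGmeas).nnnorm).coe_nnreal_ennreal
    · filter_upwards [hae_notB] with x hx
      rw [← enorm_eq_nnnorm, Real.enorm_eq_ofReal_abs]
      apply ENNReal.ofReal_le_ofReal
      have h1 := hG_bnd x hx
      have h2 := (hF_bnd (ψ n) x).1
      have h3 := (hF_bnd (ψ n) x).2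
      rw [abs_le] at h1 ⊢
      constructor <;> [linarith [h1.2]; linarith [h1.1]]
    · have : ∫⁻ _, ENNReal.ofReal (4 * C) ∂μ = ENNReal.ofReal (4 * C) * μ Set.univ :=
        lintegral_const _
      rw [this]
      exact (ENNReal.mul_lt_top ENNReal.ofReal_lt_top (measure_lt_top _ _)).ne
    · filter_upwards [hae_notB] with x hx
      have h1 : Tendsto (fun n => F (ψ n) x - G x) atTop (𝓝 0) := by
        simpa using (hnotB x hx).sub_const (G x)
      have h2 : Tendsto (fun n => (‖F (ψ n) x - G x‖₊ : ℝ≥0)) atTop (𝓝 0) := by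
        simpa using h1.nnnorm
      simpa using (ENNReal.tendsto_coe.mpr h2)
  have hdist_eq : ∀ n, dist (u (ψ n)) H = (∫⁻ x, (‖F (ψ n) x - G x‖₊ : ℝ≥0∞) ∂μ).toReal := by
    intro n
    rw [Lp.dist_def]
    congr 1
    simp only [← enorm_eq_nnnorm]; rw [← eLpNorm_one_eq_lintegral_enorm]
    apply eLpNorm_congr_ae
    filter_upwards [haen (ψ n), hGmem.coeFn_toLp, hae_mem] with t h1 h2 h3
    rw [← hH_def] at h2
    simp only [Pi.sub_apply, h1, h2, hF_def]
    rw [hcid t h3]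
  rw [tendsto_iff_dist_tendsto_zero]
  have hfinal := (ENNReal.tendsto_toReal (by simp : (0:ℝ≥0∞) ≠ ⊤)).comp key
  simp only [ENNReal.toReal_zero] at hfinal
  have : (fun n => dist ((u ∘ ψ) n) H) =
      fun n => (∫⁻ x, (‖F (ψ n) x - G x‖₊ : ℝ≥0∞) ∂μ).toReal := funext fun n => hdist_eq n
  rw [this]
  exact hfinal
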